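/- Let (X,d,μ) be a metric measure space with a doubling measure μ (doubling constant C_d), Ω ⊂ X open, and w a weight on Ω. Then the following are equivalent (inequalities hold trivially when w(2B)=0): (b) there exist η, ε > 0 with η < C_d^{-5} such that for every ball B with 2B ⋐ Ω and every measurable F ⊂ B, μ(F) ≤ ε μ(B) implies w(F) ≤ η w(2B); (f) there exist constants α, β > 0 with β < C_d^{-5} such that w(B ∩ {w ≥ α w_{2B}}) ≤ β w(2B) for every ball B with 2B ⋐ Ω. -/

import Mathlib

open MeasureTheory Metric Set
open scoped ENNReal

/-- A nonnegative measurable representative of `w` on `K`. -/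
lemma exists_nonneg_rep {X : Type*} [MeasurableSpace X]
    (μ : Measure X) (w : X → ℝ) (hw : ∀ x, 0 ≤ w x) (K : Set X) (hK : MeasurableSet K)
    (hwK : IntegrableOn w K μ) :
    ∃ g : X → ℝ, Measurable g ∧ (∀ y, 0 ≤ g y) ∧ (w =ᵐ[μ.restrict K] g) ∧
      μ ({y | w y ≠ g y} ∩ K) = 0 := by
  obtain ⟨g₀, hg₀m, hwg₀⟩ := hwK.aestronglyMeasurable
  refine ⟨fun y => max (g₀ y) 0, hg₀m.measurable.max measurable_const,
    fun y => le_max_right _ _, ?_, ?_⟩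
  · filter_upwards [hwg₀] with y hy
    simp [← hy, max_eq_left (hw y)]
  · have h : ∀ᵐ y ∂μ.restrict K, w y = max (g₀ y) 0 := by
      filter_upwards [hwg₀] with y hy
      simp [← hy, max_eq_left (hw y)]
    have := ae_iff.mp h
    rwa [Measure.restrict_apply' hK] at this

lemma ae_eq_inter_rep {X : Type*} [MeasurableSpace X]
    (μ : Measure X) (w g : X → ℝ) (K B : Set X) (hBK : B ⊆ K)
    (hnull : μ ({y | w y ≠ g y} ∩ K) = 0) (c : ℝ) :
    ((B ∩ {y | c ≤ w y} : Set X)) =ᵐ[μ] ((B ∩ {y | c ≤ g y} : Set X)) := by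
  rw [← measure_symmDiff_eq_zero_iff]
  refine measure_mono_null ?_ hnull
  intro y hy
  rcases hy with hy | hy
  · exact ⟨fun h => hy.2 ⟨hy.1.1, by simp only [mem_setOf_eq] at *; rw [← h]; exact hy.1.2⟩,
      hBK hy.1.1⟩
  · exact ⟨fun h => hy.2 ⟨hy.1.1, by simp only [mem_setOf_eq] at *; rw [h]; exact hy.1.2⟩,
      hBK hy.1.1⟩

/-- Equivalence of condition (b) (weak `A_∞` with small constant `η < C_d⁻⁵`) and
condition (f) (distribution-set condition `w(B ∩ {w ≥ α w_{2B}}) ≤ β w(2B)` with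
`β < C_d⁻⁵`). -/
theorem small_weakAinfty_iff_distribution_set
    {X : Type*} [MetricSpace X] [MeasurableSpace X] [BorelSpace X]
    (μ : Measure X) (Cd : ℝ) (hCd : 1 < Cd)
    (hdoub : ∀ (x : X) (r : ℝ), 0 < r →
      0 < μ (ball x r) ∧ μ (ball x r) < ⊤ ∧
      μ (ball x (2 * r)) ≤ ENNReal.ofReal Cd * μ (ball x r))
    (Ω : Set X) (hΩ : IsOpen Ω) (w : X → ℝ) (hw : ∀ x, 0 ≤ w x)
    (hwloc : LocallyIntegrableOn w Ω μ) :
    (∃ η ε : ℝ, 0 < η ∧ 0 < ε ∧ η < (Cd ^ 5)⁻¹ ∧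
      ∀ (x : X) (r : ℝ), 0 < r →
        IsCompact (closure (ball x (2 * r))) → closure (ball x (2 * r)) ⊆ Ω →
        ∀ F : Set X, MeasurableSet F → F ⊆ ball x r →
          μ F ≤ ENNReal.ofReal ε * μ (ball x r) →
          ∫ y in F, w y ∂μ ≤ η * ∫ y in ball x (2 * r), w y ∂μ) ↔
    (∃ α β : ℝ, 0 < α ∧ 0 < β ∧ β < (Cd ^ 5)⁻¹ ∧
      ∀ (x : X) (r : ℝ), 0 < r →
        IsCompact (closure (ball x (2 * r))) → closure (ball x (2 * r)) ⊆ Ω →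
        ∫ y in ball x r ∩ {y | α * (⨍ z in ball x (2 * r), w z ∂μ) ≤ w y}, w y ∂μ ≤
          β * ∫ y in ball x (2 * r), w y ∂μ) := by
  have hCd0 : (0:ℝ) < Cd := lt_trans one_pos hCd
  constructor
  · rintro ⟨η, ε, hη, hε, hηC, hb⟩
    refine ⟨Cd / ε, η, div_pos hCd0 hε, hη, hηC, ?_⟩
    intro x r hr hcomp hsub
    set B := ball x r with hBdef
    set B2 := ball x (2 * r) with hB2def
    set K := closure B2 with hKdef
    have hBB2 : B ⊆ B2 := ball_subset_ball (by linarith)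
    have hB2K : B2 ⊆ K := subset_closure
    have hBK : B ⊆ K := hBB2.trans hB2K
    have hKmeas : MeasurableSet K := isClosed_closure.measurableSet
    have hwK : IntegrableOn w K μ := hwloc.integrableOn_compact_subset hsub hcomp
    have hwB2 : IntegrableOn w B2 μ := hwK.mono_set hB2K
    obtain ⟨hμB_pos, hμB_fin, hdB⟩ := hdoub x r hr
    obtain ⟨hμB2_pos, hμB2_fin, -⟩ := hdoub x (2 * r) (by linarith)
    obtain ⟨g, hgm, hg0, hwg, hnull⟩ := exists_nonneg_rep μ w hw K hKmeas hwK
    set A := ⨍ z in B2, w z ∂μ with hA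
    have hTpos : 0 < (μ B2).toReal := ENNReal.toReal_pos hμB2_pos.ne' hμB2_fin.ne
    have hInt2 : ∫ y in B2, w y ∂μ = A * (μ B2).toReal := by
      rw [hA, setAverage_eq, smul_eq_mul, measureReal_def]
      field_simp
    have hIntB2nonneg : 0 ≤ ∫ y in B2, w y ∂μ := integral_nonneg fun y => hw y
    set c := Cd / ε * A with hc
    by_cases h0 : ∫ y in B2, w y ∂μ = 0
    · have hle : ∫ y in B ∩ {y | c ≤ w y}, w y ∂μ ≤ ∫ y in B2, w y ∂μ :=
        setIntegral_mono_set hwB2 (Filter.Eventually.of_forall fun y => hw y)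
          (HasSubset.Subset.eventuallyLE fun y hy => hBB2 hy.1)
      rw [h0] at hle ⊢
      simpa using hle
    · have hIntpos : 0 < ∫ y in B2, w y ∂μ := lt_of_le_of_ne hIntB2nonneg (Ne.symm h0)
      have hApos : 0 < A := by nlinarith
      set F' := B ∩ {y | c ≤ g y} with hF'
      have hF'm : MeasurableSet F' :=
        measurableSet_ball.inter (measurableSet_le measurable_const hgm)
      have hF'B2 : F' ⊆ B2 := fun y hy => hBB2 hy.1
      have hF'K : F' ⊆ K := fun y hy => hBK hy.1
      have hF'fin : μ F' < ⊤ := lt_of_le_of_lt (measure_mono hF'B2) hμB2_fin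
      have hgK : IntegrableOn g K μ := hwK.congr hwg
      have hcheb : c * (μ F').toReal ≤ ∫ y in F', g y ∂μ :=
        setIntegral_ge_of_const_le_real hF'm hF'fin.ne (fun y hy => hy.2) (hgK.mono_set hF'K)
      have hgw : ∫ y in F', g y ∂μ = ∫ y in F', w y ∂μ := by
        refine (setIntegral_congr_ae hF'm ?_).symm
        filter_upwards [(ae_restrict_iff' hKmeas).mp hwg] with y hy hyF'
        exact hy (hF'K hyF')
      have hle2 : ∫ y in F', w y ∂μ ≤ ∫ y in B2, w y ∂μ :=
        setIntegral_mono_set hwB2 (Filter.Eventually.of_forall fun y => hw y)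
          (HasSubset.Subset.eventuallyLE hF'B2)
      have hμ2R : (μ B2).toReal ≤ Cd * (μ B).toReal := by
        have hfin : ENNReal.ofReal Cd * μ B ≠ ⊤ :=
          ENNReal.mul_ne_top ENNReal.ofReal_ne_top hμB_fin.ne
        have h := ENNReal.toReal_mono hfin hdB
        rwa [ENNReal.toReal_mul, ENNReal.toReal_ofReal hCd0.le] at h
      have hμF'R : (μ F').toReal ≤ ε * (μ B).toReal := by
        have h1 : c * (μ F').toReal ≤ A * (μ B2).toReal := by
          rw [← hInt2]; exact hcheb.trans (hgw.le.trans hle2)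
        rw [hc] at h1
        have t0 : (0:ℝ) ≤ (μ F').toReal := ENNReal.toReal_nonneg
        have d1 : Cd / ε * (μ F').toReal ≤ (μ B2).toReal := by
          have h1' : A * (Cd / ε * (μ F').toReal) ≤ A * (μ B2).toReal := by
            rw [show A * (Cd / ε * (μ F').toReal) = Cd / ε * A * (μ F').toReal from by ring]
            exact h1
          exact le_of_mul_le_mul_left h1' hApos
        have d2 : Cd / ε * (μ F').toReal ≤ Cd * (μ B).toReal := d1.trans hμ2R
        calc (μ F').toReal = ε / Cd * (Cd / ε * (μ F').toReal) := by field_simp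
          _ ≤ ε / Cd * (Cd * (μ B).toReal) := mul_le_mul_of_nonneg_left d2 (by positivity)
          _ = ε * (μ B).toReal := by field_simp
      have hμF' : μ F' ≤ ENNReal.ofReal ε * μ B := by
        calc μ F' = ENNReal.ofReal (μ F').toReal := (ENNReal.ofReal_toReal hF'fin.ne).symm
          _ ≤ ENNReal.ofReal (ε * (μ B).toReal) := ENNReal.ofReal_le_ofReal hμF'R
          _ = ENNReal.ofReal ε * ENNReal.ofReal (μ B).toReal := ENNReal.ofReal_mul hε.le
          _ = ENNReal.ofReal ε * μ B := by rw [ENNReal.ofReal_toReal hμB_fin.ne]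
      have hres := hb x r hr hcomp hsub F' hF'm inter_subset_left hμF'
      calc ∫ y in B ∩ {y | c ≤ w y}, w y ∂μ = ∫ y in F', w y ∂μ :=
            setIntegral_congr_set (ae_eq_inter_rep μ w g K B hBK hnull c)
        _ ≤ η * ∫ y in B2, w y ∂μ := hres
  · rintro ⟨α, β, hα, hβ, hβC, hf⟩
    have hCdpow : (0:ℝ) < (Cd ^ 5)⁻¹ := by positivity
    set ε := ((Cd ^ 5)⁻¹ - β) / (2 * α) with hεdef
    have hεpos : 0 < ε := div_pos (by linarith) (by positivity)
    have hkey : α * ε = ((Cd ^ 5)⁻¹ - β) / 2 := by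
      rw [hεdef]; field_simp
    refine ⟨(β + (Cd ^ 5)⁻¹) / 2, ε, by linarith, hεpos, by linarith, ?_⟩
    intro x r hr hcomp hsub F hFm hFB hμF
    set B := ball x r with hBdef
    set B2 := ball x (2 * r) with hB2def
    set K := closure B2 with hKdef
    have hBB2 : B ⊆ B2 := ball_subset_ball (by linarith)
    have hB2K : B2 ⊆ K := subset_closure
    have hBK : B ⊆ K := hBB2.trans hB2K
    have hKmeas : MeasurableSet K := isClosed_closure.measurableSet
    have hwK : IntegrableOn w K μ := hwloc.integrableOn_compact_subset hsub hcomp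
    have hwB2 : IntegrableOn w B2 μ := hwK.mono_set hB2K
    obtain ⟨hμB_pos, hμB_fin, hdB⟩ := hdoub x r hr
    obtain ⟨hμB2_pos, hμB2_fin, -⟩ := hdoub x (2 * r) (by linarith)
    obtain ⟨g, hgm, hg0, hwg, hnull⟩ := exists_nonneg_rep μ w hw K hKmeas hwK
    set A := ⨍ z in B2, w z ∂μ with hA
    have hTpos : 0 < (μ B2).toReal := ENNReal.toReal_pos hμB2_pos.ne' hμB2_fin.ne
    have hInt2 : ∫ y in B2, w y ∂μ = A * (μ B2).toReal := by
      rw [hA, setAverage_eq, smul_eq_mul, measureReal_def]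
      field_simp
    have hIntB2nonneg : 0 ≤ ∫ y in B2, w y ∂μ := integral_nonneg fun y => hw y
    have hAnonneg : 0 ≤ A := by
      rw [hA, setAverage_eq, smul_eq_mul]
      exact mul_nonneg (by positivity) hIntB2nonneg
    set c := α * A with hc
    have hcnonneg : 0 ≤ c := mul_nonneg hα.le hAnonneg
    set S := {y : X | c ≤ g y} with hS
    have hSm : MeasurableSet S := measurableSet_le measurable_const hgm
    have hFK : F ⊆ K := fun y hy => hBK (hFB hy)
    have hwF : IntegrableOn w F μ := hwK.mono_set hFK
    have hsplit : ∫ y in F, w y ∂μ = ∫ y in F ∩ S, w y ∂μ + ∫ y in F \ S, w y ∂μ := by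
      have hdis : Disjoint (F ∩ S) (F \ S) :=
        disjoint_sdiff_self_right.mono_left inter_subset_right
      have h := setIntegral_union hdis (hFm.diff hSm) (hwF.mono_set inter_subset_left)
        (hwF.mono_set diff_subset) (f := w) (μ := μ)
      rwa [inter_union_diff] at h
    have h1 : ∫ y in F ∩ S, w y ∂μ ≤ β * ∫ y in B2, w y ∂μ := by
      have hsub1 : ((F ∩ S : Set X)) ≤ᵐ[μ] ((B ∩ {y | c ≤ w y} : Set X)) := by
        have h := (ae_eq_inter_rep μ w g K B hBK hnull c).symm.le
        exact (HasSubset.Subset.eventuallyLE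
          (fun y hy => ⟨hFB hy.1, hy.2⟩ : (F ∩ S : Set X) ⊆ (B ∩ {y | c ≤ g y} : Set X))).trans h
      have h := setIntegral_mono_set (hwK.mono_set fun y hy => hBK hy.1)
        (Filter.Eventually.of_forall fun y => hw y) hsub1
      exact h.trans (hf x r hr hcomp hsub)
    have hFSfin : μ (F \ S) < ⊤ :=
      lt_of_le_of_lt (measure_mono (diff_subset.trans hFB)) hμB_fin
    have h2a : ∫ y in F \ S, w y ∂μ = ∫ y in F \ S, g y ∂μ := by
      refine setIntegral_congr_ae (hFm.diff hSm) ?_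
      filter_upwards [(ae_restrict_iff' hKmeas).mp hwg] with y hy hyFS
      exact hy (hFK hyFS.1)
    have h2b : ∫ y in F \ S, g y ∂μ ≤ c * (μ (F \ S)).toReal := by
      have hn := norm_setIntegral_le_of_norm_le_const (f := g) hFSfin
        (fun y hy => by
          have hgy : g y ≤ c := le_of_not_ge hy.2
          rw [Real.norm_eq_abs, abs_of_nonneg (hg0 y)]
          exact hgy)
      calc ∫ y in F \ S, g y ∂μ ≤ |∫ y in F \ S, g y ∂μ| := le_abs_self _
        _ ≤ c * (μ (F \ S)).toReal := by rwa [Real.norm_eq_abs] at hn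
    have hμFr : (μ F).toReal ≤ ε * (μ B).toReal := by
      have hfin : ENNReal.ofReal ε * μ B ≠ ⊤ :=
        ENNReal.mul_ne_top ENNReal.ofReal_ne_top hμB_fin.ne
      have h := ENNReal.toReal_mono hfin hμF
      rwa [ENNReal.toReal_mul, ENNReal.toReal_ofReal hεpos.le] at h
    have hμFSr : (μ (F \ S)).toReal ≤ (μ F).toReal :=
      ENNReal.toReal_mono (lt_of_le_of_lt (measure_mono hFB) hμB_fin).ne
        (measure_mono diff_subset)
    have hAB : A * (μ B).toReal ≤ ∫ y in B2, w y ∂μ := by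
      rw [hInt2]
      exact mul_le_mul_of_nonneg_left
        (ENNReal.toReal_mono hμB2_fin.ne (measure_mono hBB2)) hAnonneg
    have h2 : ∫ y in F \ S, w y ∂μ ≤ α * ε * ∫ y in B2, w y ∂μ := by
      have s1 : c * (μ (F \ S)).toReal ≤ c * (ε * (μ B).toReal) :=
        mul_le_mul_of_nonneg_left (hμFSr.trans hμFr) hcnonneg
      have s2 : c * (ε * (μ B).toReal) = α * ε * (A * (μ B).toReal) := by rw [hc]; ring
      have s3 : α * ε * (A * (μ B).toReal) ≤ α * ε * ∫ y in B2, w y ∂μ :=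
        mul_le_mul_of_nonneg_left hAB (by positivity)
      rw [h2a]
      exact h2b.trans (by linarith)
    have hfin2 : α * ε * ∫ y in B2, w y ∂μ = ((Cd ^ 5)⁻¹ - β) / 2 * ∫ y in B2, w y ∂μ := by
      rw [hkey]
    rw [hsplit]
    nlinarith [hIntB2nonneg]
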